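/- arXiv:2207.03114 — 2 statements merged into one kernel-verified Lean document; each statement's English description precedes it below -/
import Mathlib

section
/- Let φ₁ : [0,∞) → [0,∞) be convex and strictly increasing with φ₁(0) = 0 and φ₁(1) = 1, and let φ₂ : [0,∞) → [0,∞) be convex and monotone increasing with φ₂(0) = 0. Fix a > 0 and b ≥ 0, and for each ε ≥ 0 let λ(ε) be the unique positive solution of φ₁(a/λ) + ε·φ₂(b/λ) = 1 (so λ(0) = a). Then the left derivative (φ₁)'_l(1) = lim_{s→1⁻} (φ₁(1) − φ₁(s))/(1 − s) exists, is positive, and lim_{ε→0⁺} (λ(ε) − a)/ε = a·φ₂(b/a)/(φ₁)'_l(1). (This is the scalar, pointwise form of Lemma 6.2 of the paper: with a = u_K(x) and b = u_L(x) it gives lim_{ε→0⁺}(u_{K+_{φ,ε}L}(x) − u_K(x))/ε = (u_K(x)/(φ₁)'_l(1))·φ₂(u_L(x)/u_K(x)).) -/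
open Filter Topology

/-- Scalar, pointwise form of Lemma 6.2 of the paper: with `a = u_K(x) > 0`, `b = u_L(x) ≥ 0`
and `λ(ε)` the unique positive solution of `φ₁(a/λ) + ε·φ₂(b/λ) = 1`, the left derivative
`(φ₁)'_l(1) = lim_{s→1⁻} (φ₁(1) − φ₁(s))/(1 − s)` exists and is positive, and
`lim_{ε→0⁺} (λ(ε) − a)/ε = a·φ₂(b/a)/(φ₁)'_l(1)`. -/
theorem orlicz_combination_variation (φ₁ φ₂ : ℝ → ℝ)
    (hφ₁conv : ConvexOn ℝ (Set.Ici (0 : ℝ)) φ₁)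
    (hφ₁mono : StrictMonoOn φ₁ (Set.Ici (0 : ℝ)))
    (hφ₁nonneg : ∀ s ∈ Set.Ici (0 : ℝ), 0 ≤ φ₁ s)
    (hφ₁0 : φ₁ 0 = 0) (hφ₁1 : φ₁ 1 = 1)
    (hφ₂conv : ConvexOn ℝ (Set.Ici (0 : ℝ)) φ₂)
    (hφ₂mono : MonotoneOn φ₂ (Set.Ici (0 : ℝ)))
    (hφ₂nonneg : ∀ s ∈ Set.Ici (0 : ℝ), 0 ≤ φ₂ s)
    (hφ₂0 : φ₂ 0 = 0)
    (a b : ℝ) (ha : 0 < a) (hb : 0 ≤ b)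
    (l : ℝ → ℝ)
    (hl : ∀ ε : ℝ, 0 ≤ ε → 0 < l ε ∧ φ₁ (a / l ε) + ε * φ₂ (b / l ε) = 1) :
    ∃ d : ℝ, 0 < d ∧
      Tendsto (fun s : ℝ => (φ₁ 1 - φ₁ s) / (1 - s)) (𝓝[<] (1 : ℝ)) (𝓝 d) ∧
      Tendsto (fun ε : ℝ => (l ε - a) / ε) (𝓝[>] (0 : ℝ))
        (𝓝 (a * φ₂ (b / a) / d)) := by
  set F : ℝ → ℝ := fun s => (φ₁ 1 - φ₁ s) / (1 - s) with hF
  have hFalt : ∀ s : ℝ, F s = (φ₁ s - φ₁ 1) / (s - 1) := by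
    intro s
    simp only [hF]
    rw [← neg_sub (φ₁ s), ← neg_sub s, neg_div_neg_eq]
  -- monotonicity of slopes
  have hmono : MonotoneOn F (Set.Ioo (0 : ℝ) 1) := by
    intro x hx y hy hxy
    rw [hFalt, hFalt]
    exact hφ₁conv.secant_mono (by norm_num) (le_of_lt hx.1) (le_of_lt hy.1)
      (ne_of_lt hx.2) (ne_of_lt hy.2) hxy
  have hbdd : BddAbove (F '' Set.Ioo (0 : ℝ) 1) := by
    refine ⟨(φ₁ 2 - φ₁ 1) / (2 - 1), ?_⟩
    rintro z ⟨x, hx, rfl⟩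
    rw [hFalt]
    exact hφ₁conv.secant_mono (by norm_num) (le_of_lt hx.1) (by norm_num)
      (ne_of_lt hx.2) (by norm_num) (by linarith [hx.2])
  set d : ℝ := sSup (F '' Set.Ioo (0 : ℝ) 1) with hd
  have hne : (Set.Ioo (0 : ℝ) 1).Nonempty := ⟨1/2, by norm_num⟩
  have hFtendsto : Tendsto F (𝓝[<] (1 : ℝ)) (𝓝 d) :=
    MonotoneOn.tendsto_nhdsWithin_Ioo_left hne hmono hbdd
  have hhalf : F (1/2) ≤ d := le_csSup hbdd ⟨1/2, by norm_num, rfl⟩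
  have hdpos : 0 < d := by
    have h1 : φ₁ (1/2) < φ₁ 1 := hφ₁mono (by norm_num) (by norm_num) (by norm_num)
    have h2 : 0 < F (1/2) := by
      rw [hF]
      apply div_pos <;> [skip; norm_num] <;> simp <;> linarith
    linarith
  have hdne : d ≠ 0 := ne_of_gt hdpos
  refine ⟨d, hdpos, hFtendsto, ?_⟩
  -- basic facts about l
  have hla : ∀ ε : ℝ, 0 ≤ ε → a ≤ l ε := by
    intro ε hε
    obtain ⟨hpos, heq⟩ := hl ε hε
    by_contra hlto
    push_neg at hlto
    have h1 : 1 < a / l ε := (one_lt_div hpos).2 hlto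
    have h2 : φ₁ 1 < φ₁ (a / l ε) := hφ₁mono (by norm_num) (Set.mem_Ici.2 (le_of_lt (by linarith))) h1
    have h3 : 0 ≤ ε * φ₂ (b / l ε) :=
      mul_nonneg hε (hφ₂nonneg _ (div_nonneg hb hpos.le))
    rw [hφ₁1] at h2
    linarith
  have hφ₂le : ∀ ε : ℝ, 0 ≤ ε → φ₂ (b / l ε) ≤ φ₂ (b / a) := by
    intro ε hε
    have hpos := (hl ε hε).1
    have hdd : b / l ε ≤ b / a := div_le_div_of_nonneg_left hb ha (hla ε hε)
    exact hφ₂mono (Set.mem_Ici.2 (div_nonneg hb hpos.le))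
      (Set.mem_Ici.2 (div_nonneg hb ha.le)) hdd
  by_cases hC : φ₂ (b / a) = 0
  · -- degenerate case: l ε = a for all ε ≥ 0
    have hla' : ∀ ε : ℝ, 0 ≤ ε → l ε = a := by
      intro ε hε
      obtain ⟨hpos, heq⟩ := hl ε hε
      have h0 : φ₂ (b / l ε) = 0 :=
        le_antisymm (by rw [← hC]; exact hφ₂le ε hε)
          (hφ₂nonneg _ (Set.mem_Ici.2 (div_nonneg hb hpos.le)))
      rw [h0, mul_zero, add_zero, ← hφ₁1] at heq
      have h1 := hφ₁mono.injOn (Set.mem_Ici.2 (div_nonneg ha.le hpos.le)) (by norm_num) heq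
      field_simp at h1
      linarith
    rw [hC]
    simp only [mul_zero, zero_div]
    apply Tendsto.congr' (f₁ := fun _ => (0:ℝ))
    · filter_upwards [self_mem_nhdsWithin] with ε hε
      rw [hla' ε (le_of_lt hε), sub_self, zero_div]
    · exact tendsto_const_nhds
  · have hCpos : 0 < φ₂ (b / a) :=
      lt_of_le_of_ne (hφ₂nonneg _ (Set.mem_Ici.2 (div_nonneg hb ha.le))) (Ne.symm hC)
    have hbpos : 0 < b := by
      rcases lt_or_eq_of_le hb with h | h
      · exact h
      · exfalso; apply hC; rw [← h, zero_div, hφ₂0]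
    -- for ε > 0, a < l ε
    have hlt : ∀ ε : ℝ, 0 < ε → a < l ε := by
      intro ε hε
      obtain ⟨hpos, heq⟩ := hl ε hε.le
      rcases lt_or_eq_of_le (hla ε hε.le) with h | h
      · exact h
      · exfalso
        rw [← h, div_self (ne_of_gt ha), hφ₁1] at heq
        have hz : ε * φ₂ (b / a) = 0 := by linarith
        rcases mul_eq_zero.1 hz with h' | h'
        · exact ne_of_gt hε h'
        · exact hC h'
    -- s ε := a / l ε tends to 1 from the left
    have hst : Tendsto (fun ε => a / l ε) (𝓝[>] (0 : ℝ)) (𝓝[<] (1 : ℝ)) := by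
      rw [tendsto_nhdsWithin_iff]
      constructor
      · rw [tendsto_order]
        constructor
        · intro c hc
          set c' : ℝ := max c 0 with hc'
          have hc'lt : c' < 1 := by
            rw [hc']; exact max_lt hc one_pos
          have hφc : φ₁ c' < 1 := by
            rw [← hφ₁1]
            exact hφ₁mono (Set.mem_Ici.2 (le_max_right c 0)) (by norm_num) hc'lt
          set ε₀ : ℝ := (1 - φ₁ c') / φ₂ (b / a) with hε₀
          have hε₀pos : 0 < ε₀ := div_pos (by linarith) hCpos
          filter_upwards [Ioo_mem_nhdsGT hε₀pos] with ε hε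
          obtain ⟨hεpos, hεlt⟩ := hε
          obtain ⟨hpos, heq⟩ := hl ε hεpos.le
          have h1 : ε * φ₂ (b / l ε) ≤ ε * φ₂ (b / a) :=
            mul_le_mul_of_nonneg_left (hφ₂le ε hεpos.le) hεpos.le
          have h2 : ε * φ₂ (b / a) < ε₀ * φ₂ (b / a) :=
            mul_lt_mul_of_pos_right hεlt hCpos
          have h3 : ε₀ * φ₂ (b / a) = 1 - φ₁ c' := by
            rw [hε₀]; field_simp
          have h4 : φ₁ c' < φ₁ (a / l ε) := by linarith
          have h5 : c' < a / l ε := by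
            by_contra h
            push_neg at h
            have := hφ₁mono.le_iff_le (Set.mem_Ici.2 (div_nonneg ha.le hpos.le))
              (Set.mem_Ici.2 (le_max_right c 0))
            exact absurd (this.2 h) (not_le.2 h4)
          exact lt_of_le_of_lt (le_max_left c 0) h5
        · intro c hc
          filter_upwards [self_mem_nhdsWithin] with ε hε
          have hpos := (hl ε (le_of_lt hε)).1
          have hlt1 : a / l ε < 1 := (div_lt_one hpos).2 (hlt ε hε)
          linarith
      · filter_upwards [self_mem_nhdsWithin] with ε hε
        have hpos := (hl ε (le_of_lt hε)).1
        exact Set.mem_Iio.2 ((div_lt_one hpos).2 (hlt ε hε))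
    -- limit of the auxiliary function g
    have hcont : ContinuousOn φ₂ (Set.Ioi (0 : ℝ)) := by
      have h := hφ₂conv.continuousOn_interior
      rwa [interior_Ici] at h
    have hba : (0 : ℝ) < b / a := div_pos hbpos ha
    have hφ₂at : ContinuousAt φ₂ (b / a) :=
      hcont.continuousAt (isOpen_Ioi.mem_nhds hba)
    have htend₂ : Tendsto (fun s : ℝ => φ₂ (b * s / a)) (𝓝[<] (1 : ℝ)) (𝓝 (φ₂ (b / a))) := by
      have h1 : Tendsto (fun s : ℝ => b * s / a) (𝓝[<] (1 : ℝ)) (𝓝 (b / a)) := by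
        have h2 : Tendsto (fun s : ℝ => b * s / a) (𝓝 (1 : ℝ)) (𝓝 (b * 1 / a)) :=
          (tendsto_id.const_mul b).div_const a
        rw [mul_one] at h2
        exact h2.mono_left nhdsWithin_le_nhds
      exact hφ₂at.tendsto.comp h1
    have hts : Tendsto (fun s : ℝ => s) (𝓝[<] (1 : ℝ)) (𝓝 (1 : ℝ)) :=
      tendsto_id.mono_left nhdsWithin_le_nhds
    set g : ℝ → ℝ := fun s => a * φ₂ (b * s / a) / F s / s with hg
    have hgt : Tendsto g (𝓝[<] (1 : ℝ)) (𝓝 (a * φ₂ (b / a) / d)) := by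
      have h := (((tendsto_const_nhds (x := a)).mul htend₂).div hFtendsto hdne).div
        hts one_ne_zero
      rw [div_one] at h
      exact h
    have hcomp := hgt.comp hst
    apply Tendsto.congr' _ hcomp
    filter_upwards [self_mem_nhdsWithin] with ε hε
    obtain ⟨hpos, heq⟩ := hl ε (le_of_lt hε)
    have hlε := hlt ε hε
    have hlne : l ε ≠ 0 := ne_of_gt hpos
    have hane : a ≠ 0 := ne_of_gt ha
    have hεne : ε ≠ 0 := ne_of_gt hε
    have hbs : b * (a / l ε) / a = b / l ε := by field_simp
    have hs1 : a / l ε < 1 := (div_lt_one hpos).2 hlε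
    have hφlt : φ₁ (a / l ε) < 1 := by
      rw [← hφ₁1]
      exact hφ₁mono (Set.mem_Ici.2 (div_nonneg ha.le hpos.le)) (by norm_num) hs1
    have hεP : ε * φ₂ (b / l ε) = 1 - φ₁ (a / l ε) := by linarith
    have hPnn : 0 ≤ φ₂ (b / l ε) :=
      hφ₂nonneg _ (Set.mem_Ici.2 (div_nonneg hb hpos.le))
    have hPpos : 0 < φ₂ (b / l ε) := by
      rcases hPnn.lt_or_eq with h | h
      · exact h
      · exfalso
        rw [← h, mul_zero] at hεP
        linarith
    have hPne : φ₂ (b / l ε) ≠ 0 := ne_of_gt hPpos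
    have hsub : (1 : ℝ) - a / l ε ≠ 0 := by
      intro h
      have : a / l ε = 1 := by linarith
      exact absurd this (ne_of_lt hs1)
    show g (a / l ε) = (l ε - a) / ε
    rw [hg]
    simp only
    rw [hbs, hF]
    simp only
    rw [hφ₁1, ← hεP]
    field_simp
end

section
/- Let n ≥ 1, let K ⊆ ℝ^{n+1} be a convex body (compact convex set with nonempty interior) containing the origin in its interior, and let p ≥ n+1 be a real number. Then Vol(K) ≤ (1/p) ∫_{S^n} u_K(x)^p dσ(x) + (1/(n+1) − 1/p)·σ(S^n). Moreover, if p > n+1, equality holds if and only if K is the closed unit ball centered at the origin. (This is the instance F = σ_n^{1/n}, k = n — for which the modified quermassintegral W_F(K) equals Vol(K) — of the paper's corollary in Section 6: W_F(K) ≤ (1/p)∫_{S^n} u^p dx + (1/(k+1) − 1/p)|S^n| for p ≥ k+1, with equality if and only if K is a unit ball.) -/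
open scoped InnerProductSpace

noncomputable def supportFn {E : Type*} [NormedAddCommGroup E] [InnerProductSpace ℝ E]
    (K : Set E) (x : E) : ℝ :=
  sSup ((fun y => ⟪x, y⟫_ℝ) '' K)

noncomputable def radialFn {E : Type*} [NormedAddCommGroup E] [InnerProductSpace ℝ E]
    (K : Set E) (ξ : E) : ℝ :=
  sSup {t : ℝ | 0 ≤ t ∧ t • ξ ∈ K}

open MeasureTheory

section Aux

open Metric Set
open scoped ENNReal Pointwise

/-! ### Calculus: the scalar inequality `t^(n+1)/(n+1) ≤ t^p/p + (1/(n+1) - 1/p)` -/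

noncomputable def gfun (n : ℕ) (p : ℝ) (t : ℝ) : ℝ :=
  t^p/p + (1/((n:ℝ)+1) - 1/p) - t^(n+1)/((n:ℝ)+1)

lemma gfun_hasDeriv (n : ℕ) {p : ℝ} (hp1 : 1 ≤ p) (t : ℝ) :
    HasDerivAt (gfun n p) (t^(p-1) - t^n) t := by
  have hp0 : p ≠ 0 := by positivity
  have hn0 : ((n:ℝ)+1) ≠ 0 := by positivity
  have h1 := ((Real.hasDerivAt_rpow_const (x := t) (p := p) (Or.inr hp1)).div_const p).add_const
    (1/((n:ℝ)+1) - 1/p)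
  have h2 := (hasDerivAt_pow (n+1) t).div_const ((n:ℝ)+1)
  have h := h1.sub h2
  refine HasDerivAt.congr_deriv (f := gfun n p) h ?_
  push_cast
  field_simp

lemma gfun_one (n : ℕ) {p : ℝ} (hp0 : p ≠ 0) : gfun n p 1 = 0 := by
  have hn0 : ((n:ℝ)+1) ≠ 0 := by positivity
  simp only [gfun, Real.one_rpow, one_pow]
  field_simp
  ring

lemma gfun_cont (n : ℕ) {p : ℝ} (hp1 : 1 ≤ p) : Continuous (gfun n p) := by
  have h0 : (0:ℝ) ≤ p := by linarith
  unfold gfun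
  have := Real.continuous_rpow_const h0
  fun_prop

lemma gfun_nonneg (n : ℕ) {p : ℝ} (hp : (n:ℝ)+1 ≤ p) {t : ℝ} (ht : 0 ≤ t) :
    0 ≤ gfun n p t := by
  have hp1 : (1:ℝ) ≤ p := by
    have : (0:ℝ) ≤ n := Nat.cast_nonneg n
    linarith
  have hcont := (gfun_cont n hp1).continuousOn (s := Icc (0:ℝ) 1)
  have hcont2 := (gfun_cont n hp1).continuousOn (s := Ici (1:ℝ))
  rcases le_total 1 t with h1t | ht1
  · have hmono : MonotoneOn (gfun n p) (Ici 1) := by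
      refine monotoneOn_of_deriv_nonneg (convex_Ici 1) hcont2
        (fun x hx => ((gfun_hasDeriv n hp1 x).differentiableAt).differentiableWithinAt) ?_
      intro x hx
      rw [interior_Ici] at hx
      rw [(gfun_hasDeriv n hp1 x).deriv]
      have hx1 : (1:ℝ) ≤ x := le_of_lt hx
      have : x ^ (n:ℝ) ≤ x ^ (p-1) := Real.rpow_le_rpow_of_exponent_le hx1 (by linarith)
      rw [Real.rpow_natCast] at this
      linarith
    have := hmono (self_mem_Ici) h1t h1t
    rwa [gfun_one n (by positivity)] at this
  · have hanti : AntitoneOn (gfun n p) (Icc 0 1) := by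
      refine antitoneOn_of_deriv_nonpos (convex_Icc 0 1) hcont
        (fun x hx => ((gfun_hasDeriv n hp1 x).differentiableAt).differentiableWithinAt) ?_
      intro x hx
      rw [interior_Icc] at hx
      rw [(gfun_hasDeriv n hp1 x).deriv]
      have : x ^ (p-1) ≤ x ^ (n:ℝ) := Real.rpow_le_rpow_of_exponent_ge hx.1 hx.2.le (by linarith)
      rw [Real.rpow_natCast] at this
      linarith
    have := hanti ⟨ht, ht1⟩ (right_mem_Icc.2 zero_le_one) ht1
    rwa [gfun_one n (by positivity)] at this

lemma gfun_eq_zero (n : ℕ) {p : ℝ} (hp : (n:ℝ)+1 < p) {t : ℝ} (ht : 0 ≤ t)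
    (he : gfun n p t = 0) : t = 1 := by
  have hp1 : (1:ℝ) ≤ p := by
    have : (0:ℝ) ≤ n := Nat.cast_nonneg n
    linarith
  by_contra hne
  rcases lt_or_gt_of_ne hne with ht1 | h1t
  · have hanti : StrictAntiOn (gfun n p) (Icc 0 1) := by
      refine strictAntiOn_of_deriv_neg (convex_Icc 0 1) ((gfun_cont n hp1).continuousOn) ?_
      intro x hx
      rw [interior_Icc] at hx
      rw [(gfun_hasDeriv n hp1 x).deriv]
      have : x ^ (p-1) < x ^ (n:ℝ) :=
        Real.rpow_lt_rpow_of_exponent_gt hx.1 hx.2 (by linarith)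
      rw [Real.rpow_natCast] at this
      linarith
    have := hanti ⟨ht, ht1.le⟩ (right_mem_Icc.2 zero_le_one) ht1
    rw [gfun_one n (by positivity), he] at this
    exact lt_irrefl 0 this
  · have hmono : StrictMonoOn (gfun n p) (Ici 1) := by
      refine strictMonoOn_of_deriv_pos (convex_Ici 1) ((gfun_cont n hp1).continuousOn) ?_
      intro x hx
      rw [interior_Ici] at hx
      rw [(gfun_hasDeriv n hp1 x).deriv]
      have : x ^ (n:ℝ) < x ^ (p-1) :=
        Real.rpow_lt_rpow_of_exponent_lt hx (by linarith)
      rw [Real.rpow_natCast] at this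
      linarith
    have := hmono self_mem_Ici (le_of_lt h1t : (1:ℝ) ≤ t) h1t
    rw [gfun_one n (by positivity), he] at this
    exact lt_irrefl 0 this

lemma calc_ineq (n : ℕ) {p : ℝ} (hp : (n:ℝ)+1 ≤ p) {t : ℝ} (ht : 0 ≤ t) :
    t^(n+1)/((n:ℝ)+1) ≤ t^p/p + (1/((n:ℝ)+1) - 1/p) := by
  have := gfun_nonneg n hp ht
  unfold gfun at this
  linarith

lemma calc_eq (n : ℕ) {p : ℝ} (hp : (n:ℝ)+1 < p) {t : ℝ} (ht : 0 ≤ t)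
    (he : t^(n+1)/((n:ℝ)+1) = t^p/p + (1/((n:ℝ)+1) - 1/p)) : t = 1 := by
  refine gfun_eq_zero n hp ht ?_
  unfold gfun
  linarith

/-! ### Support function basics -/

section Geometry
variable {E : Type*} [NormedAddCommGroup E] [InnerProductSpace ℝ E] {K : Set E} {R : ℝ}

lemma bddAbove_inner_image (hK : K ⊆ closedBall 0 R) (x : E) :
    BddAbove ((fun y => ⟪x, y⟫_ℝ) '' K) := by
  refine ⟨‖x‖ * R, ?_⟩
  rintro _ ⟨y, hy, rfl⟩
  have h1 : ⟪x, y⟫_ℝ ≤ ‖x‖ * ‖y‖ := real_inner_le_norm x y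
  have h2 : ‖y‖ ≤ R := by simpa [mem_closedBall_zero_iff] using hK hy
  nlinarith [norm_nonneg x]

lemma le_supportFn (hK : K ⊆ closedBall 0 R) {y : E} (hy : y ∈ K) (x : E) :
    ⟪x, y⟫_ℝ ≤ supportFn K x :=
  le_csSup (bddAbove_inner_image hK x) ⟨y, hy, rfl⟩

lemma supportFn_le (hne : K.Nonempty) {x : E} {a : ℝ} (h : ∀ y ∈ K, ⟪x, y⟫_ℝ ≤ a) :
    supportFn K x ≤ a :=
  csSup_le (hne.image _) (by rintro _ ⟨y, hy, rfl⟩; exact h y hy)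

lemma supportFn_lipschitz (hne : K.Nonempty) (hK : K ⊆ closedBall 0 R) (hR : 0 ≤ R) :
    LipschitzWith R.toNNReal (supportFn K) := by
  refine LipschitzWith.of_le_add_mul _ (fun x x' => ?_)
  rw [Real.coe_toNNReal R hR]
  refine supportFn_le hne (fun y hy => ?_)
  have h1 : ⟪x - x', y⟫_ℝ ≤ ‖x - x'‖ * ‖y‖ := real_inner_le_norm _ _
  have h2 : ‖y‖ ≤ R := by simpa [mem_closedBall_zero_iff] using hK hy
  have h3 : ⟪x', y⟫_ℝ ≤ supportFn K x' := le_supportFn hK hy x'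
  have h4 : ⟪x, y⟫_ℝ = ⟪x', y⟫_ℝ + ⟪x - x', y⟫_ℝ := by
    rw [inner_sub_left]; ring
  have h5 : dist x x' = ‖x - x'‖ := dist_eq_norm x x'
  nlinarith [norm_nonneg (x - x')]

lemma supportFn_closedBall {x : E} (hx : ‖x‖ = 1) :
    supportFn (closedBall (0:E) 1) x = 1 := by
  refine le_antisymm (supportFn_le ⟨0, mem_closedBall_self zero_le_one⟩ fun y hy => ?_) ?_
  · have h1 : ⟪x, y⟫_ℝ ≤ ‖x‖ * ‖y‖ := real_inner_le_norm x y
    have h2 : ‖y‖ ≤ 1 := by simpa [mem_closedBall_zero_iff] using hy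
    nlinarith
  · have hx1 : x ∈ closedBall (0:E) 1 := by simp [mem_closedBall_zero_iff, hx]
    have := le_supportFn (Subset.refl (closedBall (0:E) 1)) hx1 x
    rwa [real_inner_self_eq_norm_sq, hx, one_pow] at this

lemma eq_closedBall_of_supportFn [CompleteSpace E] (hKc : IsCompact K) (hconv : Convex ℝ K)
    (h0 : (0:E) ∈ K) (hu : ∀ x : E, ‖x‖ = 1 → supportFn K x = 1) :
    K = closedBall (0:E) 1 := by
  obtain ⟨R, hKR⟩ := hKc.isBounded.subset_closedBall 0
  apply Set.Subset.antisymm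
  · intro y hy
    rw [mem_closedBall_zero_iff]
    rcases eq_or_ne y 0 with rfl | hy0
    · simp
    · set x := ‖y‖⁻¹ • y with hxdef
      have hny : (0:ℝ) < ‖y‖ := norm_pos_iff.2 hy0
      have hx : ‖x‖ = 1 := by
        rw [hxdef, norm_smul, norm_inv, norm_norm, inv_mul_cancel₀ hny.ne']
      have h1 : ⟪x, y⟫_ℝ ≤ supportFn K x := le_supportFn hKR hy x
      rw [hu x hx] at h1
      rw [hxdef, real_inner_smul_left, real_inner_self_eq_norm_sq] at h1
      calc ‖y‖ = ‖y‖⁻¹ * ‖y‖^2 := by field_simp [pow_two]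
      _ ≤ 1 := h1
  · intro y hy
    by_contra hyK
    obtain ⟨f, s, hfK, hfy⟩ := geometric_hahn_banach_closed_point hconv hKc.isClosed hyK
    set v := (InnerProductSpace.toDual ℝ E).symm f with hv
    have hinner : ∀ z : E, ⟪v, z⟫_ℝ = f z := fun z => InnerProductSpace.toDual_symm_apply
    have hfy0 : 0 < f y := lt_trans (by simpa using hfK 0 h0) hfy
    have hv0 : v ≠ 0 := by
      intro h
      have := hinner y
      rw [h, inner_zero_left] at this
      exact hfy0.ne this
    have hnv : (0:ℝ) < ‖v‖ := norm_pos_iff.2 hv0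
    set x := ‖v‖⁻¹ • v with hxdef
    have hx : ‖x‖ = 1 := by
      rw [hxdef, norm_smul, norm_inv, norm_norm, inv_mul_cancel₀ hnv.ne']
    have hub : supportFn K x ≤ ‖v‖⁻¹ * s := by
      refine supportFn_le ⟨0, h0⟩ (fun z hz => ?_)
      rw [hxdef, real_inner_smul_left, hinner]
      have := (hfK z hz).le
      have hi : (0:ℝ) ≤ ‖v‖⁻¹ := inv_nonneg.2 hnv.le
      exact mul_le_mul_of_nonneg_left this hi
    have hlb : ‖v‖⁻¹ * s < ⟪x, y⟫_ℝ := by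
      rw [hxdef, real_inner_smul_left, hinner]
      exact mul_lt_mul_of_pos_left hfy (inv_pos.2 hnv)
    have hup : ⟪x, y⟫_ℝ ≤ 1 := by
      have h1 : ⟪x, y⟫_ℝ ≤ ‖x‖ * ‖y‖ := real_inner_le_norm x y
      have h2 : ‖y‖ ≤ 1 := by simpa [mem_closedBall_zero_iff] using hy
      nlinarith [hx]
    rw [hu x hx] at hub
    linarith

/-! ### Radial function basics -/

lemma radial_set_bddAbove (hKR : K ⊆ closedBall 0 R) {ξ : E} (hξ : ‖ξ‖ = 1) :
    {t : ℝ | 0 ≤ t ∧ t • ξ ∈ K} ⊆ Icc 0 R := by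
  rintro t ⟨ht0, htK⟩
  refine ⟨ht0, ?_⟩
  have := hKR htK
  rw [mem_closedBall_zero_iff, norm_smul, hξ, mul_one, Real.norm_eq_abs, abs_of_nonneg ht0] at this
  exact this

lemma radialFn_mem (hKc : IsCompact K) (h0 : (0:E) ∈ K) {ξ : E} (hξ : ‖ξ‖ = 1) :
    0 ≤ radialFn K ξ ∧ radialFn K ξ • ξ ∈ K := by
  obtain ⟨R, hKR⟩ := hKc.isBounded.subset_closedBall 0
  have hcl : IsClosed {t : ℝ | 0 ≤ t ∧ t • ξ ∈ K} := by
    have h1 : IsClosed {t : ℝ | t • ξ ∈ K} :=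
      hKc.isClosed.preimage (continuous_id.smul continuous_const)
    exact isClosed_Ici.inter h1
  have hcomp : IsCompact {t : ℝ | 0 ≤ t ∧ t • ξ ∈ K} :=
    (isCompact_Icc (a := (0:ℝ)) (b := R)).of_isClosed_subset hcl (radial_set_bddAbove hKR hξ)
  have hne : {t : ℝ | 0 ≤ t ∧ t • ξ ∈ K}.Nonempty := ⟨0, le_refl 0, by simpa using h0⟩
  exact hcomp.sSup_mem hne

lemma le_radialFn (hKc : IsCompact K) {ξ : E} (hξ : ‖ξ‖ = 1) {r : ℝ} (hr0 : 0 ≤ r)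
    (hrK : r • ξ ∈ K) : r ≤ radialFn K ξ := by
  obtain ⟨R, hKR⟩ := hKc.isBounded.subset_closedBall 0
  exact le_csSup (BddAbove.mono (radial_set_bddAbove hKR hξ) (bddAbove_Icc)) ⟨hr0, hrK⟩

lemma smul_mem_of_le_radialFn (hKc : IsCompact K) (hconv : Convex ℝ K) (h0 : (0:E) ∈ K)
    {ξ : E} (hξ : ‖ξ‖ = 1) {r : ℝ} (hr0 : 0 ≤ r)
    (hrρ : r ≤ radialFn K ξ) : r • ξ ∈ K := by
  obtain ⟨hρ0, hρK⟩ := radialFn_mem hKc h0 hξ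
  rcases eq_or_lt_of_le (hr0.trans hrρ) with h | hρpos
  · have : r = 0 := le_antisymm (hrρ.trans h.symm.le) hr0
    rw [this, zero_smul]; exact h0
  · have h1 : r • ξ = (r / radialFn K ξ) • (radialFn K ξ • ξ) := by
      rw [smul_smul, div_mul_cancel₀ _ hρpos.ne']
    rw [h1]
    exact hconv.smul_mem_of_zero_mem h0 hρK
      ⟨div_nonneg hr0 hρ0, div_le_one_of_le₀ hrρ hρ0⟩

lemma radialFn_pos (hKc : IsCompact K) {ε : ℝ} (hε : 0 < ε) (hball : ball (0:E) ε ⊆ K)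
    {ξ : E} (hξ : ‖ξ‖ = 1) : 0 < radialFn K ξ := by
  have hmem : (ε/2) • ξ ∈ K := by
    apply hball
    rw [mem_ball_zero_iff, norm_smul, hξ, mul_one, Real.norm_eq_abs, abs_of_nonneg (by linarith)]
    linarith
  have := le_radialFn hKc hξ (by linarith) hmem
  linarith

end Geometry

/-! ### Volume formula and positivity of the spherical measure on open sets -/

section Euclid
variable {n : ℕ}
local notation "E" => EuclideanSpace ℝ (Fin (n+1))

lemma volumeIoiPow_Iic (m : ℕ) (x : Ioi (0:ℝ)) :
    Measure.volumeIoiPow m (Iic x) = ENNReal.ofReal (x.1 ^ (m+1) / (m+1)) := by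
  have hsing : Measure.volumeIoiPow m {x} = 0 := by
    refine (withDensity_absolutelyContinuous _ _) ?_
    rw [comap_subtype_coe_apply measurableSet_Ioi, image_singleton, measure_singleton]
  have h1 : Measure.volumeIoiPow m (Iic x) = Measure.volumeIoiPow m (Iio x) := by
    refine le_antisymm ?_ (measure_mono Iio_subset_Iic_self)
    calc Measure.volumeIoiPow m (Iic x) = Measure.volumeIoiPow m (Iio x ∪ {x}) := by
          rw [Iio_union_right]
    _ ≤ Measure.volumeIoiPow m (Iio x) + Measure.volumeIoiPow m {x} := measure_union_le _ _
    _ = Measure.volumeIoiPow m (Iio x) := by rw [hsing, add_zero]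
  rw [h1, Measure.volumeIoiPow_apply_Iio]

lemma vol_eq_lintegral_radial (K : Set E)
    (hKc : IsCompact K) (hconv : Convex ℝ K) {ε : ℝ} (hε : 0 < ε)
    (hball : ball (0:E) ε ⊆ K) :
    (volume : Measure E) K = ∫⁻ ξ : Metric.sphere (0:E) 1,
      ENNReal.ofReal (radialFn K (ξ:E) ^ (n+1) / ((n:ℝ)+1))
      ∂(volume : Measure E).toSphere := by
  have h0 : (0:E) ∈ K := hball (mem_ball_self hε)
  have hdim : Module.finrank ℝ E = n + 1 := finrank_euclideanSpace_fin
  have hnorm : ∀ ξ : Metric.sphere (0:E) 1, ‖(ξ:E)‖ = 1 := fun ξ =>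
    mem_sphere_zero_iff_norm.1 ξ.2
  set S : Set (Metric.sphere (0:E) 1 × Ioi (0:ℝ)) := {q | (q.2 : ℝ) • (q.1 : E) ∈ K} with hSdef
  have hScont : Continuous fun q : Metric.sphere (0:E) 1 × Ioi (0:ℝ) => (q.2 : ℝ) • (q.1 : E) :=
    (continuous_subtype_val.comp continuous_snd).smul
      (continuous_subtype_val.comp continuous_fst)
  have hS : MeasurableSet S := hKc.isClosed.measurableSet.preimage hScont.measurable
  have MP := (volume : Measure E).measurePreserving_homeomorphUnitSphereProd
  have hpre : (homeomorphUnitSphereProd E) ⁻¹' S = Subtype.val ⁻¹' K := by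
    ext x
    have hx0 : (x : E) ≠ 0 := x.2
    simp only [mem_preimage, hSdef, mem_setOf_eq, homeomorphUnitSphereProd_apply_snd_coe,
      homeomorphUnitSphereProd_apply_fst_coe]
    rw [smul_inv_smul₀ (norm_ne_zero_iff.2 hx0)]
  have h2 := MP.measure_preimage hS.nullMeasurableSet
  rw [hpre] at h2
  have h1 : ((volume : Measure E).comap (Subtype.val : ({0}ᶜ : Set E) → E))
      ((Subtype.val : ({0}ᶜ : Set E) → E) ⁻¹' K) = (volume : Measure E) K := by
    rw [comap_subtype_coe_apply (measurableSet_singleton (0:E)).compl,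
      Subtype.image_preimage_coe]
    rw [inter_comm, ← diff_eq, measure_diff_null (measure_singleton _)]
  have h3 := (Measure.prod_apply hS :
    ((volume : Measure E).toSphere.prod
      (Measure.volumeIoiPow (Module.finrank ℝ E - 1))) S
      = ∫⁻ ξ, Measure.volumeIoiPow (Module.finrank ℝ E - 1) (Prod.mk ξ ⁻¹' S)
          ∂(volume : Measure E).toSphere)
  rw [← h1, h2, h3]
  refine lintegral_congr fun ξ => ?_
  have hρpos : 0 < radialFn K (ξ:E) := radialFn_pos hKc hε hball (hnorm ξ)
  have hslice : Prod.mk ξ ⁻¹' S = Iic (⟨radialFn K (ξ:E), hρpos⟩ : Ioi (0:ℝ)) := by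
    ext r
    simp only [mem_preimage, hSdef, mem_setOf_eq, mem_Iic, ← Subtype.coe_le_coe]
    constructor
    · intro h
      exact le_radialFn hKc (hnorm ξ) r.2.out.le h
    · intro h
      exact smul_mem_of_le_radialFn hKc hconv h0 (hnorm ξ) r.2.out.le h
  rw [hslice]
  have hd1 : Module.finrank ℝ E - 1 = n := by omega
  rw [hd1, volumeIoiPow_Iic]

lemma toSphere_open_eq_empty {s : Set (Metric.sphere (0:E) 1)} (hs : IsOpen s)
    (h0 : (volume : Measure E).toSphere s = 0) : s = ∅ := by
  rw [Measure.toSphere_apply' _ hs.measurableSet] at h0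
  have hdim : (Module.finrank ℝ (EuclideanSpace ℝ (Fin (n+1))) : ℝ≥0∞) ≠ 0 := by
    rw [finrank_euclideanSpace_fin]; simp
  rw [mul_eq_zero] at h0
  have hμ0 : (volume : Measure E) (Ioo (0:ℝ) 1 • (Subtype.val '' s)) = 0 :=
    h0.resolve_left hdim
  rw [← Measure.toSphere_apply_aux (volume : Measure E) s ⟨1, mem_Ioi.2 one_pos⟩] at hμ0
  by_contra hne
  obtain ⟨ξ, hξ⟩ := nonempty_iff_ne_empty.2 hne
  set U : Set E := Subtype.val ''
    ((homeomorphUnitSphereProd E) ⁻¹' (s ×ˢ Iio (⟨1, mem_Ioi.2 one_pos⟩ : Ioi (0:ℝ)))) with hU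
  have hIio : IsOpen (Iio (⟨1, mem_Ioi.2 one_pos⟩ : Ioi (0:ℝ))) := by
    have : (Iio (⟨1, mem_Ioi.2 one_pos⟩ : Ioi (0:ℝ)))
        = (Subtype.val : Ioi (0:ℝ) → ℝ) ⁻¹' (Iio (1:ℝ)) := rfl
    rw [this]
    exact isOpen_Iio.preimage continuous_subtype_val
  have hUopen : IsOpen U :=
    (isOpen_compl_singleton).isOpenMap_subtype_val _
      ((hs.prod hIio).preimage (homeomorphUnitSphereProd E).continuous)
  have hUne : U.Nonempty := by
    have hξ0 : (ξ : E) ≠ 0 := by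
      intro h
      have := mem_sphere_zero_iff_norm.1 ξ.2
      rw [h, norm_zero] at this
      norm_num at this
    have hx0 : ((2⁻¹ : ℝ) • (ξ:E)) ≠ 0 := smul_ne_zero (by norm_num) hξ0
    refine ⟨(2⁻¹:ℝ) • (ξ:E), ⟨⟨(2⁻¹:ℝ) • (ξ:E), hx0⟩, ?_, rfl⟩⟩
    have hnorm : ‖(2⁻¹:ℝ) • (ξ:E)‖ = 2⁻¹ := by
      rw [norm_smul, mem_sphere_zero_iff_norm.1 ξ.2, mul_one, Real.norm_eq_abs]
      norm_num
    constructor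
    · show (⟨_, _⟩ : Metric.sphere (0:E) 1) ∈ s
      have : ‖((⟨(2⁻¹:ℝ) • (ξ:E), hx0⟩ : ({0}ᶜ : Set E)) : E)‖⁻¹
          • (((⟨(2⁻¹:ℝ) • (ξ:E), hx0⟩ : ({0}ᶜ : Set E))) : E) = (ξ : E) := by
        show ‖(2⁻¹:ℝ) • (ξ:E)‖⁻¹ • ((2⁻¹:ℝ) • (ξ:E)) = (ξ:E)
        rw [hnorm, smul_smul]
        norm_num
      convert hξ using 1
      exact Subtype.ext ((one_smul ℝ _).trans this)
    · rw [mem_Iio, ← Subtype.coe_lt_coe]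
      simp only [homeomorphUnitSphereProd_apply_snd_coe]
      show ‖(2⁻¹:ℝ) • (ξ:E)‖ < 1
      rw [hnorm]; norm_num
  exact absurd hμ0 (hUopen.measure_pos volume hUne).ne'

end Euclid

end Aux

open Metric Set
open scoped ENNReal

/-- The instance `F = σ_n^{1/n}`, `k = n` of the paper's Section 6 corollary: for a convex
body `K ⊆ ℝ^{n+1}` with `0 ∈ int K` and `p ≥ n+1`,
`Vol(K) ≤ (1/p) ∫_{S^n} u_K^p dσ + (1/(n+1) − 1/p)·σ(S^n)`; if `p > n+1`, equality holds
iff `K` is the closed unit ball centered at the origin. Here `σ = volume.toSphere` is the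
spherical surface measure. -/
theorem vol_le_integral_supportFn_rpow (n : ℕ) (hn : 1 ≤ n) (p : ℝ) (hp : (n : ℝ) + 1 ≤ p)
    (K : Set (EuclideanSpace ℝ (Fin (n + 1))))
    (hKcomp : IsCompact K) (hKconv : Convex ℝ K)
    (h0K : (0 : EuclideanSpace ℝ (Fin (n + 1))) ∈ interior K) :
    (volume K).toReal ≤
      (1 / p) *
        ∫ x : Metric.sphere (0 : EuclideanSpace ℝ (Fin (n + 1))) 1,
          supportFn K (x : EuclideanSpace ℝ (Fin (n + 1))) ^ p
          ∂((volume : Measure (EuclideanSpace ℝ (Fin (n + 1)))).toSphere)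
      + (1 / ((n : ℝ) + 1) - 1 / p) *
          (((volume : Measure (EuclideanSpace ℝ (Fin (n + 1)))).toSphere Set.univ).toReal) ∧
    ((n : ℝ) + 1 < p →
      ((volume K).toReal =
        (1 / p) *
          ∫ x : Metric.sphere (0 : EuclideanSpace ℝ (Fin (n + 1))) 1,
            supportFn K (x : EuclideanSpace ℝ (Fin (n + 1))) ^ p
            ∂((volume : Measure (EuclideanSpace ℝ (Fin (n + 1)))).toSphere)
        + (1 / ((n : ℝ) + 1) - 1 / p) *
            (((volume : Measure (EuclideanSpace ℝ (Fin (n + 1)))).toSphere Set.univ).toReal) ↔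
        K = Metric.closedBall (0 : EuclideanSpace ℝ (Fin (n + 1))) 1)) := by
  classical
  set σ := (volume : Measure (EuclideanSpace ℝ (Fin (n + 1)))).toSphere with hσdef
  obtain ⟨ε, hε, hball⟩ : ∃ ε > 0, ball (0 : EuclideanSpace ℝ (Fin (n+1))) ε ⊆ K :=
    Metric.mem_nhds_iff.1 (mem_interior_iff_mem_nhds.1 h0K)
  have h0 : (0 : EuclideanSpace ℝ (Fin (n+1))) ∈ K := interior_subset h0K
  obtain ⟨R, hKR⟩ := hKcomp.isBounded.subset_closedBall 0
  have hR0 : 0 ≤ R := by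
    have := hKR h0
    rwa [mem_closedBall_zero_iff, norm_zero] at this
  have hKne : K.Nonempty := ⟨0, h0⟩
  have hn1 : (0:ℝ) < (n:ℝ)+1 := by positivity
  have hp0 : (0:ℝ) < p := lt_of_lt_of_le hn1 hp
  have hucont : Continuous (supportFn K) := (supportFn_lipschitz hKne hKR hR0).continuous
  have hus : Continuous fun ξ : Metric.sphere (0 : EuclideanSpace ℝ (Fin (n+1))) 1 =>
      supportFn K (ξ : EuclideanSpace ℝ (Fin (n+1))) := hucont.comp continuous_subtype_val
  have hnorm : ∀ ξ : Metric.sphere (0 : EuclideanSpace ℝ (Fin (n+1))) 1,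
      ‖(ξ : EuclideanSpace ℝ (Fin (n+1)))‖ = 1 := fun ξ => mem_sphere_zero_iff_norm.1 ξ.2
  have hρpos : ∀ ξ : Metric.sphere (0 : EuclideanSpace ℝ (Fin (n+1))) 1,
      0 < radialFn K (ξ : EuclideanSpace ℝ (Fin (n+1))) := fun ξ =>
    radialFn_pos hKcomp hε hball (hnorm ξ)
  have hρu : ∀ ξ : Metric.sphere (0 : EuclideanSpace ℝ (Fin (n+1))) 1,
      radialFn K (ξ : EuclideanSpace ℝ (Fin (n+1)))
        ≤ supportFn K (ξ : EuclideanSpace ℝ (Fin (n+1))) := by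
    intro ξ
    obtain ⟨hρ0, hρK⟩ := radialFn_mem hKcomp h0 (hnorm ξ)
    have := le_supportFn hKR hρK (ξ : EuclideanSpace ℝ (Fin (n+1)))
    rwa [real_inner_smul_right, real_inner_self_eq_norm_sq, hnorm ξ, one_pow, mul_one] at this
  have hupos : ∀ ξ : Metric.sphere (0 : EuclideanSpace ℝ (Fin (n+1))) 1,
      0 < supportFn K (ξ : EuclideanSpace ℝ (Fin (n+1))) := fun ξ =>
    lt_of_lt_of_le (hρpos ξ) (hρu ξ)
  set c : ℝ := 1/((n:ℝ)+1) - 1/p with hcdef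
  have hc0 : 0 ≤ c := by
    have := one_div_le_one_div_of_le hn1 hp
    simp only [hcdef]
    linarith
  set H : Metric.sphere (0 : EuclideanSpace ℝ (Fin (n+1))) 1 → ℝ :=
    fun ξ => supportFn K (ξ : EuclideanSpace ℝ (Fin (n+1))) ^ p / p + c with hHdef
  have hHcont : Continuous H := by
    have h1 : Continuous fun ξ : Metric.sphere (0 : EuclideanSpace ℝ (Fin (n+1))) 1 =>
        supportFn K (ξ : EuclideanSpace ℝ (Fin (n+1))) ^ p :=
      (Real.continuous_rpow_const hp0.le).comp hus
    exact (h1.div_const p).add continuous_const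
  have hHnn : ∀ ξ, 0 ≤ H ξ := fun ξ =>
    add_nonneg (div_nonneg (Real.rpow_nonneg (hupos ξ).le p) hp0.le) hc0
  have hupint : Integrable (fun ξ : Metric.sphere (0 : EuclideanSpace ℝ (Fin (n+1))) 1 =>
      supportFn K (ξ : EuclideanSpace ℝ (Fin (n+1))) ^ p) σ := by
    refine Continuous.integrable_of_hasCompactSupport
      ((Real.continuous_rpow_const hp0.le).comp hus) ?_
    exact (isClosed_tsupport _).isCompact
  have hHint : Integrable H σ :=
    hHcont.integrable_of_hasCompactSupport (isClosed_tsupport _).isCompact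
  have hvol := vol_eq_lintegral_radial K hKcomp hKconv hε hball
  have hFH : ∀ ξ : Metric.sphere (0 : EuclideanSpace ℝ (Fin (n+1))) 1,
      ENNReal.ofReal (radialFn K (ξ : EuclideanSpace ℝ (Fin (n+1))) ^ (n+1) / ((n:ℝ)+1))
        ≤ ENNReal.ofReal (H ξ) := by
    intro ξ
    refine ENNReal.ofReal_le_ofReal ?_
    have h1 : radialFn K (ξ:_) ^ (n+1) ≤ supportFn K (ξ:_) ^ (n+1) :=
      pow_le_pow_left₀ (hρpos ξ).le (hρu ξ) _
    have h2 : radialFn K (ξ:_) ^ (n+1) / ((n:ℝ)+1)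
        ≤ supportFn K (ξ:_) ^ (n+1) / ((n:ℝ)+1) := (div_le_div_iff_of_pos_right hn1).2 h1
    exact h2.trans (calc_ineq n hp (hupos ξ).le)
  have hlintH : ∫⁻ ξ, ENNReal.ofReal (H ξ) ∂σ = ENNReal.ofReal (∫ ξ, H ξ ∂σ) :=
    (ofReal_integral_eq_lintegral_ofReal hHint (ae_of_all _ hHnn)).symm
  have hHint_eq : ∫ ξ, H ξ ∂σ
      = (1/p) * (∫ ξ : Metric.sphere (0 : EuclideanSpace ℝ (Fin (n+1))) 1,
          supportFn K (ξ : EuclideanSpace ℝ (Fin (n+1))) ^ p ∂σ) + c * (σ univ).toReal := by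
    simp only [hHdef]
    rw [integral_add (hupint.div_const p) (integrable_const c), integral_div, integral_const,
      smul_eq_mul, measureReal_def]
    ring
  have hle : (volume : Measure (EuclideanSpace ℝ (Fin (n+1)))) K
      ≤ ENNReal.ofReal (∫ ξ, H ξ ∂σ) := by
    rw [hvol, ← hlintH]
    exact lintegral_mono hFH
  have hfirst : (volume K).toReal ≤ ∫ ξ, H ξ ∂σ :=
    ENNReal.toReal_le_of_le_ofReal (integral_nonneg hHnn) hle
  rw [hHint_eq] at hfirst
  refine ⟨hfirst, ?_⟩
  intro hplt
  constructor
  · -- equality implies K is the unit ball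
    intro heq
    have hKfin : (volume : Measure (EuclideanSpace ℝ (Fin (n+1)))) K ≠ ⊤ :=
      hKcomp.measure_lt_top.ne
    rw [← hHint_eq] at heq
    have hvol2 : (volume : Measure (EuclideanSpace ℝ (Fin (n+1)))) K
        = ENNReal.ofReal (∫ ξ, H ξ ∂σ) := by
      rw [← heq, ENNReal.ofReal_toReal hKfin]
    set G : Metric.sphere (0 : EuclideanSpace ℝ (Fin (n+1))) 1 → ℝ :=
      fun ξ => supportFn K (ξ : EuclideanSpace ℝ (Fin (n+1))) ^ (n+1) / ((n:ℝ)+1) with hGdef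
    have hGH : ∀ ξ, G ξ ≤ H ξ := fun ξ => calc_ineq n hp (hupos ξ).le
    have hGnn : ∀ ξ, 0 ≤ G ξ := fun ξ =>
      div_nonneg (pow_nonneg (hupos ξ).le _) hn1.le
    have hGcont : Continuous G := ((hus.pow (n+1)).div_const _)
    have hGmeas : Measurable fun ξ => ENNReal.ofReal (G ξ) :=
      (ENNReal.continuous_ofReal.comp hGcont).measurable
    have hHmeas : Measurable fun ξ => ENNReal.ofReal (H ξ) :=
      (ENNReal.continuous_ofReal.comp hHcont).measurable
    have hFG : ∀ ξ : Metric.sphere (0 : EuclideanSpace ℝ (Fin (n+1))) 1,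
        ENNReal.ofReal (radialFn K (ξ : EuclideanSpace ℝ (Fin (n+1))) ^ (n+1) / ((n:ℝ)+1))
          ≤ ENNReal.ofReal (G ξ) := by
      intro ξ
      refine ENNReal.ofReal_le_ofReal ?_
      exact (div_le_div_iff_of_pos_right hn1).2 (pow_le_pow_left₀ (hρpos ξ).le (hρu ξ) _)
    have hGeqH : ∫⁻ ξ, ENNReal.ofReal (G ξ) ∂σ = ∫⁻ ξ, ENNReal.ofReal (H ξ) ∂σ := by
      refine le_antisymm (lintegral_mono fun ξ => ENNReal.ofReal_le_ofReal (hGH ξ)) ?_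
      rw [hlintH, ← hvol2, hvol]
      exact lintegral_mono hFG
    have hGfin : ∫⁻ ξ, ENNReal.ofReal (G ξ) ∂σ ≠ ⊤ := by
      rw [hGeqH, hlintH]
      exact ENNReal.ofReal_ne_top
    have hsub := lintegral_sub hGmeas hGfin
      (ae_of_all _ fun ξ => ENNReal.ofReal_le_ofReal (hGH ξ))
    rw [hGeqH, tsub_self] at hsub
    have h0ae := (lintegral_eq_zero_iff (hHmeas.sub hGmeas)).1 hsub
    have huae : ∀ᵐ (ξ : Metric.sphere (0 : EuclideanSpace ℝ (Fin (n+1))) 1) ∂σ,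
        supportFn K ξ.1 = 1 := by
      filter_upwards [h0ae] with ξ hξ
      have hξ' : ENNReal.ofReal (H ξ) - ENNReal.ofReal (G ξ) = 0 := hξ
      have h1 : ENNReal.ofReal (H ξ) ≤ ENNReal.ofReal (G ξ) := tsub_eq_zero_iff_le.1 hξ'
      have h2 : H ξ ≤ G ξ := (ENNReal.ofReal_le_ofReal_iff (hGnn ξ)).1 h1
      exact calc_eq n hplt (hupos ξ).le (le_antisymm (hGH ξ) h2)
    set A : Set (Metric.sphere (0 : EuclideanSpace ℝ (Fin (n+1))) 1) :=
      {ξ | supportFn K ξ.1 ≠ 1} with hAdef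
    have hAopen : IsOpen A :=
      (isClosed_eq hus continuous_const).isOpen_compl
    have hAnull : σ A = 0 := by
      rw [ae_iff] at huae
      exact huae
    have hAempty := toSphere_open_eq_empty hAopen hAnull
    have hall : ∀ x : EuclideanSpace ℝ (Fin (n+1)), ‖x‖ = 1 → supportFn K x = 1 := by
      intro x hx
      by_contra hne
      have hmem : (⟨x, mem_sphere_zero_iff_norm.2 hx⟩ :
          Metric.sphere (0 : EuclideanSpace ℝ (Fin (n+1))) 1) ∈ A := hne
      rw [hAempty] at hmem
      exact hmem
    exact eq_closedBall_of_supportFn hKcomp hKconv h0 hall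
  · -- the unit ball attains equality
    intro hKball
    subst hKball
    have hu1 : ∀ ξ : Metric.sphere (0 : EuclideanSpace ℝ (Fin (n+1))) 1,
        supportFn (closedBall (0 : EuclideanSpace ℝ (Fin (n+1))) 1)
          (ξ : EuclideanSpace ℝ (Fin (n+1))) = 1 := fun ξ => supportFn_closedBall (hnorm ξ)
    have hI : (∫ ξ : Metric.sphere (0 : EuclideanSpace ℝ (Fin (n+1))) 1,
        supportFn (closedBall (0 : EuclideanSpace ℝ (Fin (n+1))) 1)
          (ξ : EuclideanSpace ℝ (Fin (n+1))) ^ p ∂σ) = (σ univ).toReal := by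
      rw [integral_congr_ae (ae_of_all _ fun ξ => by rw [hu1 ξ, Real.one_rpow])]
      rw [integral_const, smul_eq_mul, mul_one, measureReal_def]
    have hdim : Module.finrank ℝ (EuclideanSpace ℝ (Fin (n+1))) = n + 1 :=
      finrank_euclideanSpace_fin
    have hσuniv : σ univ = ((n+1 : ℕ) : ℝ≥0∞)
        * (volume : Measure (EuclideanSpace ℝ (Fin (n+1)))) (ball 0 1) := by
      rw [hσdef, Measure.toSphere_apply_univ, hdim]
    have hballfin : (volume : Measure (EuclideanSpace ℝ (Fin (n+1)))) (ball 0 1) ≠ ⊤ :=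
      measure_ball_lt_top.ne
    have hT : (σ univ).toReal = ((n:ℝ)+1)
        * ((volume : Measure (EuclideanSpace ℝ (Fin (n+1)))) (ball 0 1)).toReal := by
      rw [hσuniv, ENNReal.toReal_mul, ENNReal.toReal_natCast]
      push_cast
      ring
    have hvolcb : (volume : Measure (EuclideanSpace ℝ (Fin (n+1))))
        (closedBall 0 1) = (volume : Measure (EuclideanSpace ℝ (Fin (n+1)))) (ball 0 1) :=
      Measure.addHaar_closedBall_eq_addHaar_ball volume 0 1
    rw [hvolcb, hI, hT, hcdef]
    field_simp
    ring
end
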